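/- arXiv:2509.18791 — 6 statements merged into one kernel-verified Lean document; each statement's English description precedes it below -/
import Mathlib

section
/- Let g : ℝ → ℝ be 1-Lipschitz with g(x) ≥ |x| for all x ∈ ℝ, and let n ∈ ℕ. Let P be the set of functions H : ℤ → ℤ such that |H(c+1) - H(c)| = 1, H(c) ≡ c + 1 (mod 2), and H(c) + 1 ≤ (n+1)·g(c/(n+1)) for all c ∈ ℤ. Then P is nonempty and has a greatest element H* with respect to the pointwise order (i.e. H* ∈ P and H(c) ≤ H*(c) for every H ∈ P and c ∈ ℤ), and this greatest element satisfies 0 ≤ (n+1)·g(c/(n+1)) - (H*(c) + 1) ≤ 2 for all c ∈ ℤ. -/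
/-- Given a 1-Lipschitz profile `g ≥ |·|`, the set of up-down paths with parity
`H(c) ≡ c + 1 (mod 2)` lying below `(n+1)·g` (in the sense `H(c) + 1 ≤ (n+1)·g(c/(n+1))`)
is nonempty, has a greatest element `H*`, and `H*` approximates `(n+1)·g` within
an additive error of 2. -/
theorem stmt_3 (g : ℝ → ℝ)
    (hlip : ∀ x y : ℝ, |g x - g y| ≤ |x - y|)
    (hg : ∀ x : ℝ, |x| ≤ g x) (n : ℕ) :
    let P : Set (ℤ → ℤ) := {H | (∀ c : ℤ, |H (c + 1) - H c| = 1) ∧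
      (∀ c : ℤ, H c % 2 = (c + 1) % 2) ∧
      (∀ c : ℤ, ((H c : ℝ) + 1) ≤ (n + 1) * g ((c : ℝ) / (n + 1)))}
    ∃ Hstar ∈ P, (∀ H ∈ P, ∀ c : ℤ, H c ≤ Hstar c) ∧
      (∀ c : ℤ, 0 ≤ (n + 1 : ℝ) * g ((c : ℝ) / (n + 1)) - ((Hstar c : ℝ) + 1) ∧
        (n + 1 : ℝ) * g ((c : ℝ) / (n + 1)) - ((Hstar c : ℝ) + 1) ≤ 2) := by
  intro P
  set f : ℤ → ℝ := fun c => (n + 1 : ℝ) * g ((c : ℝ) / (n + 1)) with hf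
  set k : ℤ → ℤ := fun c => ⌊f c - 1⌋ with hk
  set Hs : ℤ → ℤ := fun c => k c - (k c - (c + 1)) % 2 with hHs
  have hnpos : (0 : ℝ) < (n : ℝ) + 1 := by positivity
  -- basic bounds on Hs
  have hmod : ∀ c : ℤ, (k c - (c + 1)) % 2 = 0 ∨ (k c - (c + 1)) % 2 = 1 := by
    intro c; omega
  have hle : ∀ c : ℤ, (Hs c : ℝ) ≤ f c - 1 := by
    intro c
    have h1 : (k c : ℝ) ≤ f c - 1 := Int.floor_le _
    have h2 : (Hs c : ℤ) ≤ k c := by simp only [hHs]; omega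
    calc (Hs c : ℝ) ≤ (k c : ℝ) := by exact_mod_cast h2
      _ ≤ f c - 1 := h1
  have hgt : ∀ c : ℤ, f c - 3 < (Hs c : ℝ) := by
    intro c
    have h1 : f c - 1 < (k c : ℝ) + 1 := Int.lt_floor_add_one _
    have h2 : k c - 1 ≤ Hs c := by simp only [hHs]; omega
    have : (k c : ℝ) - 1 ≤ (Hs c : ℝ) := by exact_mod_cast h2
    linarith
  have hpar : ∀ c : ℤ, Hs c % 2 = (c + 1) % 2 := by
    intro c; simp only [hHs]; omega
  -- Lipschitz step bound
  have hstep : ∀ c : ℤ, |f (c + 1) - f c| ≤ 1 := by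
    intro c
    have h1 : f (c + 1) - f c
        = (n + 1 : ℝ) * (g (((c : ℝ) + 1) / (n + 1)) - g ((c : ℝ) / (n + 1))) := by
      simp only [hf]; push_cast; ring
    rw [h1, abs_mul]
    have h2 : |g (((c : ℝ) + 1) / (n + 1)) - g ((c : ℝ) / (n + 1))|
        ≤ |((c : ℝ) + 1) / (n + 1) - (c : ℝ) / (n + 1)| := hlip _ _
    have h3 : ((c : ℝ) + 1) / (n + 1) - (c : ℝ) / (n + 1) = 1 / ((n : ℝ) + 1) := by
      field_simp; ring
    have h4 : |((n : ℝ) + 1)| = (n : ℝ) + 1 := abs_of_pos hnpos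
    rw [h3] at h2
    have h5 : |(1 : ℝ) / ((n : ℝ) + 1)| = 1 / ((n : ℝ) + 1) := by
      rw [abs_of_pos]; positivity
    rw [h5] at h2
    calc |(n : ℝ) + 1| * |g (((c : ℝ) + 1) / (n + 1)) - g ((c : ℝ) / (n + 1))|
        ≤ ((n : ℝ) + 1) * (1 / ((n : ℝ) + 1)) := by
          rw [h4]; exact mul_le_mul_of_nonneg_left h2 (le_of_lt hnpos)
      _ = 1 := by field_simp
  -- up-down property
  have hud : ∀ c : ℤ, |Hs (c + 1) - Hs c| = 1 := by
    intro c
    have h1 := hle c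
    have h2 := hgt c
    have h3 := hle (c + 1)
    have h4 := hgt (c + 1)
    have h5 := hstep c
    have h6 : -(1 : ℝ) ≤ f (c + 1) - f c := by
      have := neg_abs_le (f (c + 1) - f c); linarith
    have h7 : f (c + 1) - f c ≤ 1 := le_of_abs_le h5
    have hlt : ((Hs (c + 1) - Hs c : ℤ) : ℝ) < 3 := by push_cast; linarith
    have hgt' : (-3 : ℝ) < ((Hs (c + 1) - Hs c : ℤ) : ℝ) := by push_cast; linarith
    have hlt' : Hs (c + 1) - Hs c < 3 := by exact_mod_cast hlt
    have hgt'' : -3 < Hs (c + 1) - Hs c := by exact_mod_cast hgt'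
    have p1 := hpar c
    have p2 := hpar (c + 1)
    have hd : Hs (c + 1) - Hs c = 1 ∨ Hs (c + 1) - Hs c = -1 := by omega
    rcases hd with h | h <;> rw [h] <;> norm_num
  have hfc : ∀ c : ℤ, f c = (n + 1 : ℝ) * g ((c : ℝ) / (n + 1)) := fun c => rfl
  refine ⟨Hs, ⟨hud, hpar, fun c => by have := hle c; rw [← hfc c]; linarith⟩, ?_, ?_⟩
  · rintro H ⟨-, Hpar, Hle⟩ c
    have h1 : (H c : ℝ) ≤ f c - 1 := by have := Hle c; rw [hfc c]; linarith
    have h2 : H c ≤ k c := Int.le_floor.2 h1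
    have h3 := Hpar c
    simp only [hHs]
    omega
  · intro c
    have h1 := hle c
    have h2 := hgt c
    rw [← hfc c]
    constructor <;> linarith
end

section
/- Let x, y, φ ∈ ℝ with φ > 0 and 2(x² + y²) < φ². Then φ - x - y > 0, and the complex number ξ := ((y - x) + i·√(φ² - 2(x² + y²))) / (φ - x - y) satisfies Im ξ > 0 and (φ + x + y)/ξ - (φ - x + y)/(ξ + 1) - (φ + x - y)/(ξ - 1) = 0. Moreover, for any z ∈ ℂ with z ∉ {0, 1, -1}, the equation (φ + x + y)/z - (φ - x + y)/(z + 1) - (φ + x - y)/(z - 1) = 0 holds if and only if z = ξ or z = conj(ξ). -/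
open Complex

/-- In the liquid region `2(x² + y²) < φ²` (with `φ > 0`), one has `φ - x - y > 0`,
the point `ξ = ((y - x) + i√(φ² - 2(x² + y²)))/(φ - x - y)` lies in the upper
half-plane, it is a critical point of the modified action, and the only critical
points in `ℂ \ {0, 1, -1}` are `ξ` and its conjugate. -/
theorem stmt_6 (x y φ : ℝ) (hφ : 0 < φ) (h : 2 * (x ^ 2 + y ^ 2) < φ ^ 2) :
    0 < φ - x - y ∧
    (let ξ : ℂ := (((y - x : ℝ) : ℂ) +
        Complex.I * ((Real.sqrt (φ ^ 2 - 2 * (x ^ 2 + y ^ 2)) : ℝ) : ℂ)) /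
        ((φ - x - y : ℝ) : ℂ)
     0 < ξ.im ∧
     ((φ + x + y : ℝ) : ℂ) / ξ - ((φ - x + y : ℝ) : ℂ) / (ξ + 1) -
        ((φ + x - y : ℝ) : ℂ) / (ξ - 1) = 0 ∧
     ∀ z : ℂ, z ≠ 0 → z ≠ 1 → z ≠ -1 →
       (((φ + x + y : ℝ) : ℂ) / z - ((φ - x + y : ℝ) : ℂ) / (z + 1) -
          ((φ + x - y : ℝ) : ℂ) / (z - 1) = 0 ↔ z = ξ ∨ z = starRingEnd ℂ ξ)) := by
  have hD : 0 < φ ^ 2 - 2 * (x ^ 2 + y ^ 2) := by linarith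
  have hs : 0 < φ - x - y := by nlinarith [sq_nonneg (x - y), sq_nonneg (x + y + φ)]
  set r : ℝ := Real.sqrt (φ ^ 2 - 2 * (x ^ 2 + y ^ 2)) with hrdef
  have hr : 0 < r := Real.sqrt_pos.mpr hD
  have hr2 : r ^ 2 = φ ^ 2 - 2 * (x ^ 2 + y ^ 2) := Real.sq_sqrt hD.le
  set ξ : ℂ := (((y - x : ℝ) : ℂ) + Complex.I * (r : ℂ)) / ((φ - x - y : ℝ) : ℂ) with hξ
  have hsC : ((φ - x - y : ℝ) : ℂ) ≠ 0 := Complex.ofReal_ne_zero.mpr hs.ne'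
  have hξeq : ξ = (((y - x) / (φ - x - y) : ℝ) : ℂ) + (((r / (φ - x - y) : ℝ)) : ℂ) * I := by
    rw [hξ]; push_cast; field_simp
  have him : ξ.im = r / (φ - x - y) := by
    rw [hξeq, Complex.add_im, Complex.ofReal_im, Complex.mul_im, Complex.ofReal_re, Complex.ofReal_im, Complex.I_im, Complex.I_re, mul_one, mul_zero, zero_add, add_zero]
  have himpos : 0 < ξ.im := by rw [him]; positivity
  have hconj : starRingEnd ℂ ξ =
      (((y - x : ℝ) : ℂ) - Complex.I * (r : ℂ)) / ((φ - x - y : ℝ) : ℂ) := by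
    rw [hξ]; simp [map_div₀, Complex.conj_ofReal, Complex.conj_I]; ring
  have hr2C : ((r : ℂ)) ^ 2 = ((φ : ℂ)) ^ 2 - 2 * (((x : ℂ)) ^ 2 + ((y : ℂ)) ^ 2) := by
    exact_mod_cast congrArg (Complex.ofReal) hr2
  have hkey : ∀ z : ℂ, ((φ - x - y : ℝ) : ℂ) * ((z - ξ) * (z - starRingEnd ℂ ξ)) =
      ((φ - x - y : ℝ) : ℂ) * z ^ 2 - 2 * ((y - x : ℝ) : ℂ) * z + ((φ + x + y : ℝ) : ℂ) := by
    intro z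
    rw [hξ, hconj]
    push_cast at hsC ⊢
    field_simp [hsC]
    ring_nf
    simp only [Complex.I_sq]
    linear_combination hr2C
  have hall : ∀ z : ℂ, z ≠ 0 → z ≠ 1 → z ≠ -1 →
      (((φ + x + y : ℝ) : ℂ) / z - ((φ - x + y : ℝ) : ℂ) / (z + 1) -
          ((φ + x - y : ℝ) : ℂ) / (z - 1) = 0 ↔ z = ξ ∨ z = starRingEnd ℂ ξ) := by
    intro z hz0 hz1 hz2
    have hz1' : z + 1 ≠ 0 := by
      intro hc; apply hz2; linear_combination hc
    have hz2' : z - 1 ≠ 0 := sub_ne_zero.mpr hz1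
    have hden : z * (z + 1) * (z - 1) ≠ 0 := mul_ne_zero (mul_ne_zero hz0 hz1') hz2'
    have hrepr : ((φ + x + y : ℝ) : ℂ) / z - ((φ - x + y : ℝ) : ℂ) / (z + 1) -
        ((φ + x - y : ℝ) : ℂ) / (z - 1) =
        -(((φ - x - y : ℝ) : ℂ) * z ^ 2 - 2 * ((y - x : ℝ) : ℂ) * z + ((φ + x + y : ℝ) : ℂ)) /
          (z * (z + 1) * (z - 1)) := by
      field_simp
      push_cast
      ring
    rw [hrepr, div_eq_zero_iff, or_iff_left hden, neg_eq_zero, ← hkey z, mul_eq_zero,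
      or_iff_right hsC, mul_eq_zero, sub_eq_zero, sub_eq_zero]
  refine ⟨hs, himpos, ?_, hall⟩
  have hξ0 : ξ ≠ 0 := by intro hc; rw [hc] at himpos; simp at himpos
  have hξ1 : ξ ≠ 1 := by intro hc; rw [hc] at himpos; simp at himpos
  have hξ2 : ξ ≠ -1 := by intro hc; rw [hc] at himpos; simp at himpos
  exact (hall ξ hξ0 hξ1 hξ2).mpr (Or.inl rfl)
end

section
/- Let x, y, φ ∈ ℝ with φ > 0 and 2(x² + y²) < φ², and let ξ := ((y - x) + i·√(φ² - 2(x² + y²))) / (φ - x - y). Then (φ + x + y)/ξ² - (φ - x + y)/(ξ + 1)² - (φ + x - y)/(ξ - 1)² ≠ 0; that is, the second derivative of the modified action does not vanish at the critical point ξ. -/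
open Complex

/-- In the liquid region, the second derivative of the modified action does not
vanish at the upper half-plane critical point `ξ`. -/
theorem stmt_9 (x y φ : ℝ) (hφ : 0 < φ) (h : 2 * (x ^ 2 + y ^ 2) < φ ^ 2) :
    let ξ : ℂ := (((y - x : ℝ) : ℂ) +
        Complex.I * ((Real.sqrt (φ ^ 2 - 2 * (x ^ 2 + y ^ 2)) : ℝ) : ℂ)) /
        ((φ - x - y : ℝ) : ℂ)
    ((φ + x + y : ℝ) : ℂ) / ξ ^ 2 - ((φ - x + y : ℝ) : ℂ) / (ξ + 1) ^ 2 -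
      ((φ + x - y : ℝ) : ℂ) / (ξ - 1) ^ 2 ≠ 0 := by
  intro ξ
  set s : ℝ := Real.sqrt (φ ^ 2 - 2 * (x ^ 2 + y ^ 2)) with hs_def
  have hspos : 0 < s := Real.sqrt_pos.mpr (by linarith)
  have hs2 : s ^ 2 = φ ^ 2 - 2 * (x ^ 2 + y ^ 2) :=
    Real.sq_sqrt (by linarith)
  have hdpos : 0 < φ - x - y := by nlinarith [sq_nonneg (x - y), sq_nonneg (x + y + φ)]
  have hd0 : ((φ - x - y : ℝ) : ℂ) ≠ 0 := by
    exact_mod_cast Complex.ofReal_ne_zero.mpr hdpos.ne'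
  have hξdef : ξ = (((y - x : ℝ) : ℂ) + Complex.I * ((s : ℝ) : ℂ)) /
      ((φ - x - y : ℝ) : ℂ) := rfl
  clear_value ξ
  have hwd : ξ * ((φ - x - y : ℝ) : ℂ) = ((y - x : ℝ) : ℂ) + Complex.I * ((s : ℝ) : ℂ) := by
    rw [hξdef]; exact div_mul_cancel₀ _ hd0
  -- nonvanishing of ξ, ξ+1, ξ-1 via imaginary parts
  have hsne : s ≠ 0 := hspos.ne'
  have hξ0 : ξ ≠ 0 := by
    intro h0
    rw [h0, zero_mul] at hwd
    have := congrArg Complex.im hwd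
    simp at this
    exact hsne this.symm
  have hξp : ξ + 1 ≠ 0 := by
    intro h0
    have h1 : ξ = -1 := by linear_combination h0
    rw [h1] at hwd
    have := congrArg Complex.im hwd
    simp at this
    exact hsne this.symm
  have hξm : ξ - 1 ≠ 0 := by
    intro h0
    have h1 : ξ = 1 := by linear_combination h0
    rw [h1] at hwd
    have := congrArg Complex.im hwd
    simp at this
    exact hsne this.symm
  -- the quadratic equation satisfied by ξ
  have hquad : ((φ - x - y : ℝ) : ℂ) * ξ ^ 2 =
      2 * ((y - x : ℝ) : ℂ) * ξ - ((φ + x + y : ℝ) : ℂ) := by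
    have hsq : (ξ * ((φ - x - y : ℝ) : ℂ)) ^ 2 =
        (((y - x : ℝ) : ℂ) + Complex.I * ((s : ℝ) : ℂ)) ^ 2 := by rw [hwd]
    have hs2c : ((s : ℝ) : ℂ) ^ 2 = ((φ : ℝ) : ℂ) ^ 2 -
        2 * (((x : ℝ) : ℂ) ^ 2 + ((y : ℝ) : ℂ) ^ 2) := by
      exact_mod_cast congrArg (fun t : ℝ => (t : ℂ)) hs2
    have hcancel : ((φ - x - y : ℝ) : ℂ) * (((φ - x - y : ℝ) : ℂ) * ξ ^ 2 -
        (2 * ((y - x : ℝ) : ℂ) * ξ - ((φ + x + y : ℝ) : ℂ))) = 0 := by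
      push_cast at hsq hs2c hwd ⊢
      linear_combination hsq + ((s : ℂ)) ^ 2 * Complex.I_sq - hs2c -
        2 * ((y : ℂ) - (x : ℂ)) * hwd
    rcases mul_eq_zero.mp hcancel with h1 | h1
    · exact absurd h1 hd0
    · exact sub_eq_zero.mp h1
  -- key identity: cleared-denominator form
  have key : ((φ + x + y : ℝ) : ℂ) * ((ξ + 1) * (ξ - 1)) ^ 2 -
      ((φ - x + y : ℝ) : ℂ) * (ξ * (ξ - 1)) ^ 2 -
      ((φ + x - y : ℝ) : ℂ) * (ξ * (ξ + 1)) ^ 2 =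
      2 * Complex.I * ((s : ℝ) : ℂ) * (ξ * (ξ + 1) * (ξ - 1)) := by
    push_cast at hquad hwd ⊢
    linear_combination (1 - 3 * ξ ^ 2) * hquad + 2 * ξ * (ξ + 1) * (ξ - 1) * hwd
  have hden : ξ * (ξ + 1) * (ξ - 1) ≠ 0 := mul_ne_zero (mul_ne_zero hξ0 hξp) hξm
  have e1 : ((φ + x + y : ℝ) : ℂ) / ξ ^ 2 =
      ((φ + x + y : ℝ) : ℂ) * ((ξ + 1) * (ξ - 1)) ^ 2 / (ξ * (ξ + 1) * (ξ - 1)) ^ 2 := by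
    rw [div_eq_div_iff (pow_ne_zero 2 hξ0) (pow_ne_zero 2 hden)]; ring
  have e2 : ((φ - x + y : ℝ) : ℂ) / (ξ + 1) ^ 2 =
      ((φ - x + y : ℝ) : ℂ) * (ξ * (ξ - 1)) ^ 2 / (ξ * (ξ + 1) * (ξ - 1)) ^ 2 := by
    rw [div_eq_div_iff (pow_ne_zero 2 hξp) (pow_ne_zero 2 hden)]; ring
  have e3 : ((φ + x - y : ℝ) : ℂ) / (ξ - 1) ^ 2 =
      ((φ + x - y : ℝ) : ℂ) * (ξ * (ξ + 1)) ^ 2 / (ξ * (ξ + 1) * (ξ - 1)) ^ 2 := by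
    rw [div_eq_div_iff (pow_ne_zero 2 hξm) (pow_ne_zero 2 hden)]; ring
  have e4 : 2 * Complex.I * ((s : ℝ) : ℂ) * (ξ * (ξ + 1) * (ξ - 1)) /
      (ξ * (ξ + 1) * (ξ - 1)) ^ 2 = 2 * Complex.I * ((s : ℝ) : ℂ) / (ξ * (ξ + 1) * (ξ - 1)) := by
    rw [pow_two, div_eq_div_iff (mul_ne_zero hden hden) hden]; ring
  rw [e1, e2, e3, div_sub_div_same, div_sub_div_same, key, e4]
  exact div_ne_zero (mul_ne_zero (mul_ne_zero two_ne_zero Complex.I_ne_zero)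
    (Complex.ofReal_ne_zero.mpr hsne)) hden
end

section
/- Let ξ ∈ ℂ with Im ξ > 0 and let α, β, γ ∈ ℂ with |α| = |β| = |γ| = 1. Set g₁ = (ξ - i)/(ξ(ξ - 1)), g₂ = (ξ̄ - i)/(ξ̄(ξ̄ - 1)), h₁ = (ξ - i)/(ξ(ξ - 1)(ξ + 1)), h₂ = (ξ̄ - i)/(ξ̄(ξ̄ - 1)(ξ̄ + 1)), where ξ̄ = conj(ξ), and define E := α·g₁·h₁ + β·γ·g₂·h₁ - conj(β)·conj(γ)·g₁·h₂ - conj(α)·g₂·h₂. Then (|ξ̄ - i| - |ξ - i|)² / (|ξ|²·|ξ - 1|²·|ξ + 1|) ≤ |E| ≤ (|ξ̄ - i| + |ξ - i|)² / (|ξ|²·|ξ - 1|²·|ξ + 1|); in particular, since |ξ - i| < |ξ̄ - i| when Im ξ > 0, E ≠ 0. -/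
open Complex

private lemma aux_ge (x y : ℂ) : ‖y‖ - ‖x‖ ≤ ‖x + y‖ := by
  have h := norm_add_le (x + y) (-x)
  rw [show x + y + -x = y by ring, norm_neg] at h
  linarith

/-- Two-sided bound on the leading-order edge-length expression `E` for an edge of
type `(1,0)`, with `G_{1,0}(w) = 1/(w-1)` and `H_{1,0}(z) = 1/z`; in particular
`E ≠ 0`. -/
theorem stmt_11 (ξ α β γ : ℂ) (hξ : 0 < ξ.im)
    (hα : ‖α‖ = 1) (hβ : ‖β‖ = 1) (hγ : ‖γ‖ = 1) :
    let ξb : ℂ := starRingEnd ℂ ξ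
    let g₁ : ℂ := (ξ - Complex.I) / (ξ * (ξ - 1))
    let g₂ : ℂ := (ξb - Complex.I) / (ξb * (ξb - 1))
    let h₁ : ℂ := (ξ - Complex.I) / (ξ * (ξ - 1) * (ξ + 1))
    let h₂ : ℂ := (ξb - Complex.I) / (ξb * (ξb - 1) * (ξb + 1))
    let E : ℂ := α * g₁ * h₁ + β * γ * g₂ * h₁ -
        (starRingEnd ℂ β) * (starRingEnd ℂ γ) * g₁ * h₂ - (starRingEnd ℂ α) * g₂ * h₂
    (‖ξb - Complex.I‖ - ‖ξ - Complex.I‖) ^ 2 /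
        ((‖ξ‖) ^ 2 * (‖ξ - 1‖) ^ 2 * ‖ξ + 1‖) ≤
        ‖E‖ ∧
      ‖E‖ ≤
        (‖ξb - Complex.I‖ + ‖ξ - Complex.I‖) ^ 2 /
          ((‖ξ‖) ^ 2 * (‖ξ - 1‖) ^ 2 * ‖ξ + 1‖) ∧
      E ≠ 0 := by
  intro ξb g₁ g₂ h₁ h₂ E
  -- unimodularity identities
  have hα1 : α * (starRingEnd ℂ α) = 1 := by
    rw [Complex.mul_conj]
    norm_cast
    rw [← Complex.sq_norm, hα]; norm_num
  have hβγ1 : (β * γ) * ((starRingEnd ℂ β) * (starRingEnd ℂ γ)) = 1 := by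
    rw [show (β * γ) * ((starRingEnd ℂ β) * (starRingEnd ℂ γ))
        = (β * (starRingEnd ℂ β)) * (γ * (starRingEnd ℂ γ)) by ring,
      Complex.mul_conj, Complex.mul_conj]
    norm_cast
    rw [← Complex.sq_norm, ← Complex.sq_norm, hβ, hγ]; norm_num
  -- factorization
  have hEfac : E = (α * g₁ + β * γ * g₂) *
      (h₁ - ((starRingEnd ℂ α) * (starRingEnd ℂ β) * (starRingEnd ℂ γ)) * h₂) := by
    show α * g₁ * h₁ + β * γ * g₂ * h₁ -
        (starRingEnd ℂ β) * (starRingEnd ℂ γ) * g₁ * h₂ - (starRingEnd ℂ α) * g₂ * h₂ = _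
    linear_combination (g₁ * h₂ * ((starRingEnd ℂ β) * (starRingEnd ℂ γ))) * hα1 +
      (g₂ * h₂ * (starRingEnd ℂ α)) * hβγ1
  -- nonvanishing of denominators
  have hξ0 : ξ ≠ 0 := by intro h; rw [h] at hξ; simp at hξ
  have hξ1 : ξ - 1 ≠ 0 := by
    intro h; have : ξ = 1 := by linear_combination h
    rw [this] at hξ; simp at hξ
  have hξm1 : ξ + 1 ≠ 0 := by
    intro h; have : ξ = -1 := by linear_combination h
    rw [this] at hξ; simp at hξ
  set A := ‖ξ - Complex.I‖ with hAdef
  set B := ‖ξb - Complex.I‖ with hBdef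
  set p := ‖ξ‖ with hpdef
  set q := ‖ξ - 1‖ with hqdef
  set r := ‖ξ + 1‖ with hrdef
  have hp : 0 < p := norm_pos_iff.mpr hξ0
  have hq : 0 < q := norm_pos_iff.mpr hξ1
  have hr : 0 < r := norm_pos_iff.mpr hξm1
  -- conjugate absolute values
  have hpb : ‖ξb‖ = p := Complex.norm_conj ξ
  have hqb : ‖ξb - 1‖ = q := by
    rw [show ξb - 1 = starRingEnd ℂ (ξ - 1) by simp [ξb]]
    exact Complex.norm_conj _
  have hrb : ‖ξb + 1‖ = r := by
    rw [show ξb + 1 = starRingEnd ℂ (ξ + 1) by simp [ξb]]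
    exact Complex.norm_conj _
  -- A < B
  have hAB : A < B := by
    have h2 : A ^ 2 < B ^ 2 := by
      rw [hAdef, hBdef, Complex.sq_norm, Complex.sq_norm]
      simp only [Complex.normSq_apply, ξb, Complex.sub_re, Complex.sub_im,
        Complex.conj_re, Complex.conj_im, Complex.I_re, Complex.I_im]
      nlinarith [hξ]
    nlinarith [norm_nonneg (ξ - Complex.I), norm_nonneg (ξb - Complex.I)]
  have hA0 : 0 ≤ A := norm_nonneg _
  -- absolute values of g's and h's
  have hg1 : ‖g₁‖ = A / (p * q) := by
    simp only [g₁, norm_div, norm_mul]; rfl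
  have hg2 : ‖g₂‖ = B / (p * q) := by
    simp only [g₂, norm_div, norm_mul, hpb, hqb]; rfl
  have hh1 : ‖h₁‖ = A / (p * q * r) := by
    simp only [h₁, norm_div, norm_mul]; rfl
  have hh2 : ‖h₂‖ = B / (p * q * r) := by
    simp only [h₂, norm_div, norm_mul, hpb, hqb, hrb]; rfl
  -- bounds on the two factors
  set F₁ : ℂ := α * g₁ + β * γ * g₂ with hF1def
  set F₂ : ℂ := h₁ - ((starRingEnd ℂ α) * (starRingEnd ℂ β) * (starRingEnd ℂ γ)) * h₂
    with hF2def
  have habsαg1 : ‖α * g₁‖ = A / (p * q) := by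
    rw [norm_mul, hα, hg1, one_mul]
  have habsβγg2 : ‖β * γ * g₂‖ = B / (p * q) := by
    rw [norm_mul, norm_mul, hβ, hγ, hg2]; ring
  have habsth2 : ‖((starRingEnd ℂ α) * (starRingEnd ℂ β) * (starRingEnd ℂ γ)) * h₂‖
      = B / (p * q * r) := by
    rw [norm_mul, norm_mul, norm_mul, Complex.norm_conj, Complex.norm_conj, Complex.norm_conj,
      hα, hβ, hγ, hh2]; ring
  have hF1u : ‖F₁‖ ≤ (B + A) / (p * q) := by
    calc ‖F₁‖ ≤ ‖α * g₁‖ + ‖β * γ * g₂‖ :=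
          norm_add_le _ _
      _ = (B + A) / (p * q) := by rw [habsαg1, habsβγg2]; ring
  have hF1l : (B - A) / (p * q) ≤ ‖F₁‖ := by
    have := aux_ge (α * g₁) (β * γ * g₂)
    rw [habsαg1, habsβγg2] at this
    calc (B - A) / (p * q) = B / (p * q) - A / (p * q) := by ring
      _ ≤ ‖F₁‖ := this
  have hF2u : ‖F₂‖ ≤ (B + A) / (p * q * r) := by
    calc ‖F₂‖
        ≤ ‖h₁‖ +
          ‖((starRingEnd ℂ α) * (starRingEnd ℂ β) * (starRingEnd ℂ γ)) * h₂‖ := by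
          rw [hF2def, sub_eq_add_neg]
          exact le_trans (norm_add_le _ _) (by rw [norm_neg])
      _ = (B + A) / (p * q * r) := by rw [hh1, habsth2]; ring
  have hF2l : (B - A) / (p * q * r) ≤ ‖F₂‖ := by
    have h := aux_ge h₁ (-(((starRingEnd ℂ α) * (starRingEnd ℂ β) * (starRingEnd ℂ γ)) * h₂))
    rw [norm_neg, habsth2, hh1] at h
    calc (B - A) / (p * q * r) = B / (p * q * r) - A / (p * q * r) := by ring
      _ ≤ ‖h₁ + -(((starRingEnd ℂ α) * (starRingEnd ℂ β) * (starRingEnd ℂ γ)) * h₂)‖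
          := h
      _ = ‖F₂‖ := by rw [hF2def, sub_eq_add_neg]
  have habsE : ‖E‖ = ‖F₁‖ * ‖F₂‖ := by
    rw [hEfac, norm_mul]
  have hBA0 : 0 < B - A := by linarith
  -- combine
  have hlow : (B - A) ^ 2 / (p ^ 2 * q ^ 2 * r) ≤ ‖E‖ := by
    rw [habsE]
    have key : (B - A) ^ 2 / (p ^ 2 * q ^ 2 * r)
        = ((B - A) / (p * q)) * ((B - A) / (p * q * r)) := by
      field_simp
    rw [key]
    exact mul_le_mul hF1l hF2l (by positivity) (norm_nonneg _)
  have hup : ‖E‖ ≤ (B + A) ^ 2 / (p ^ 2 * q ^ 2 * r) := by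
    rw [habsE]
    have key : (B + A) ^ 2 / (p ^ 2 * q ^ 2 * r)
        = ((B + A) / (p * q)) * ((B + A) / (p * q * r)) := by
      field_simp
    rw [key]
    exact mul_le_mul hF1u hF2u (norm_nonneg _) (by positivity)
  refine ⟨hlow, hup, ?_⟩
  intro hE0
  rw [hE0, norm_zero] at hlow
  have : 0 < (B - A) ^ 2 / (p ^ 2 * q ^ 2 * r) := by positivity
  linarith
end

section
/- Let ξ ∈ ℂ with Im ξ > 0 and let α, β, γ ∈ ℂ with |α| = |β| = |γ| = 1. Set g₁ = 2(ξ - i)/(ξ(ξ - 1)), g₂ = 2(ξ̄ - i)/(ξ̄(ξ̄ - 1)), h₁ = (ξ - i)/((ξ - 1)(ξ + 1)²), h₂ = (ξ̄ - i)/((ξ̄ - 1)(ξ̄ + 1)²), where ξ̄ = conj(ξ), and define E := α·g₁·h₁ + β·γ·g₂·h₁ - conj(β)·conj(γ)·g₁·h₂ - conj(α)·g₂·h₂. Then 2(|ξ̄ - i| - |ξ - i|)² / (|ξ|·|ξ - 1|²·|ξ + 1|²) ≤ |E| ≤ 2(|ξ̄ - i| + |ξ - i|)² / (|ξ|·|ξ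 - 1|²·|ξ + 1|²); in particular E ≠ 0. -/
open Complex

/-- Two-sided bound on the leading-order edge-length expression `E` for an edge
between two adjacent hexagonal faces (type `(1,-1)`), with `G_{1,-1}(w) = 2/(w-1)`
and `H_{1,-1}(z) = 1/(z+1)`; in particular `E ≠ 0`. -/
theorem stmt_12 (ξ α β γ : ℂ) (hξ : 0 < ξ.im)
    (hα : ‖α‖ = 1) (hβ : ‖β‖ = 1) (hγ : ‖γ‖ = 1) :
    let ξb : ℂ := starRingEnd ℂ ξ
    let g₁ : ℂ := 2 * (ξ - Complex.I) / (ξ * (ξ - 1))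
    let g₂ : ℂ := 2 * (ξb - Complex.I) / (ξb * (ξb - 1))
    let h₁ : ℂ := (ξ - Complex.I) / ((ξ - 1) * (ξ + 1) ^ 2)
    let h₂ : ℂ := (ξb - Complex.I) / ((ξb - 1) * (ξb + 1) ^ 2)
    let E : ℂ := α * g₁ * h₁ + β * γ * g₂ * h₁ -
        (starRingEnd ℂ β) * (starRingEnd ℂ γ) * g₁ * h₂ - (starRingEnd ℂ α) * g₂ * h₂
    2 * (‖ξb - Complex.I‖ - ‖ξ - Complex.I‖) ^ 2 /
        (‖ξ‖ * (‖ξ - 1‖) ^ 2 * (‖ξ + 1‖) ^ 2) ≤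
        ‖E‖ ∧
      ‖E‖ ≤
        2 * (‖ξb - Complex.I‖ + ‖ξ - Complex.I‖) ^ 2 /
          (‖ξ‖ * (‖ξ - 1‖) ^ 2 * (‖ξ + 1‖) ^ 2) ∧
      E ≠ 0 := by
  intro ξb g₁ g₂ h₁ h₂ E
  have hξb : ξb = starRingEnd ℂ ξ := rfl
  have hg₁ : g₁ = 2 * (ξ - Complex.I) / (ξ * (ξ - 1)) := rfl
  have hg₂ : g₂ = 2 * (ξb - Complex.I) / (ξb * (ξb - 1)) := rfl
  have hh₁ : h₁ = (ξ - Complex.I) / ((ξ - 1) * (ξ + 1) ^ 2) := rfl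
  have hh₂ : h₂ = (ξb - Complex.I) / ((ξb - 1) * (ξb + 1) ^ 2) := rfl
  have hE : E = α * g₁ * h₁ + β * γ * g₂ * h₁ -
      (starRingEnd ℂ β) * (starRingEnd ℂ γ) * g₁ * h₂ - (starRingEnd ℂ α) * g₂ * h₂ := rfl
  -- unimodularity
  have hαc : α * starRingEnd ℂ α = 1 := by
    rw [Complex.mul_conj]; norm_cast; rw [← Complex.sq_norm, hα]; norm_num
  have hβc : β * starRingEnd ℂ β = 1 := by
    rw [Complex.mul_conj]; norm_cast; rw [← Complex.sq_norm, hβ]; norm_num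
  have hγc : γ * starRingEnd ℂ γ = 1 := by
    rw [Complex.mul_conj]; norm_cast; rw [← Complex.sq_norm, hγ]; norm_num
  -- factorization
  set A : ℂ := α * g₁ + β * γ * g₂ with hA
  set B : ℂ := h₁ - starRingEnd ℂ α * starRingEnd ℂ β * starRingEnd ℂ γ * h₂ with hB
  have hfac : E = A * B := by
    rw [hE, hA, hB]
    linear_combination (starRingEnd ℂ β * starRingEnd ℂ γ * g₁ * h₂) * hαc +
      (starRingEnd ℂ α * g₂ * h₂ * β * starRingEnd ℂ β) * hγc +
      (starRingEnd ℂ α * g₂ * h₂) * hβc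
  -- abbreviations
  set a := ‖ξ‖ with ha
  set b := ‖ξ - 1‖ with hb
  set c := ‖ξ + 1‖ with hc
  set r := ‖ξ - Complex.I‖ with hr
  set s := ‖ξb - Complex.I‖ with hs
  -- nonvanishing
  have him : ξ.im ≠ 0 := ne_of_gt hξ
  have hξ0 : ξ ≠ 0 := by intro h; rw [h] at him; simp at him
  have hξ1 : ξ - 1 ≠ 0 := by
    intro h; rw [sub_eq_zero] at h; rw [h] at him; simp at him
  have hξ1' : ξ + 1 ≠ 0 := by
    intro h; rw [add_eq_zero_iff_eq_neg] at h; rw [h] at him; simp at him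
  have ha0 : 0 < a := norm_pos_iff.mpr hξ0
  have hb0 : 0 < b := norm_pos_iff.mpr hξ1
  have hc0 : 0 < c := norm_pos_iff.mpr hξ1'
  -- conjugate abs values
  have habsconj : ‖ξb‖ = a := by rw [hξb]; exact Complex.norm_conj ξ
  have hconj1 : ξb - 1 = starRingEnd ℂ (ξ - 1) := by rw [hξb, map_sub, map_one]
  have hconj1' : ξb + 1 = starRingEnd ℂ (ξ + 1) := by rw [hξb, map_add, map_one]
  have habsconj1 : ‖ξb - 1‖ = b := by rw [hconj1]; exact Complex.norm_conj _
  have habsconj1' : ‖ξb + 1‖ = c := by rw [hconj1']; exact Complex.norm_conj _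
  -- r < s
  have hrs : r < s := by
    have h1 : r ^ 2 = ξ.re ^ 2 + (ξ.im - 1) ^ 2 := by
      rw [hr, Complex.sq_norm, Complex.normSq_apply]
      simp [Complex.sub_re, Complex.sub_im]
      ring
    have h2 : s ^ 2 = ξ.re ^ 2 + (ξ.im + 1) ^ 2 := by
      rw [hs, hξb, Complex.sq_norm, Complex.normSq_apply]
      simp [Complex.sub_re, Complex.sub_im]
      ring
    have hlt : r ^ 2 < s ^ 2 := by rw [h1, h2]; nlinarith
    exact lt_of_pow_lt_pow_left₀ 2 (norm_nonneg _) hlt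
  have hr0 : 0 ≤ r := norm_nonneg _
  have hs0 : 0 ≤ s := norm_nonneg _
  -- abs of g's and h's
  have habsg₁ : ‖g₁‖ = 2 * r / (a * b) := by
    rw [hg₁, norm_div, norm_mul, norm_mul, Complex.norm_two]
  have habsg₂ : ‖g₂‖ = 2 * s / (a * b) := by
    rw [hg₂, norm_div, norm_mul, norm_mul, Complex.norm_two, habsconj, habsconj1]
  have habsh₁ : ‖h₁‖ = r / (b * c ^ 2) := by
    rw [hh₁, norm_div, norm_mul, norm_pow]
  have habsh₂ : ‖h₂‖ = s / (b * c ^ 2) := by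
    rw [hh₂, norm_div, norm_mul, norm_pow, habsconj1, habsconj1']
  -- bounds on A
  have hAe₁ : ‖α * g₁‖ = 2 * r / (a * b) := by
    rw [norm_mul, hα, one_mul, habsg₁]
  have hAe₂ : ‖β * γ * g₂‖ = 2 * s / (a * b) := by
    rw [norm_mul, norm_mul, hβ, hγ, one_mul, one_mul, habsg₂]
  have hAu : ‖A‖ ≤ 2 * r / (a * b) + 2 * s / (a * b) := by
    calc ‖A‖ ≤ ‖α * g₁‖ + ‖β * γ * g₂‖ :=
          norm_add_le _ _
      _ = 2 * r / (a * b) + 2 * s / (a * b) := by rw [hAe₁, hAe₂]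
  have hAl : 2 * s / (a * b) - 2 * r / (a * b) ≤ ‖A‖ := by
    have h := norm_sub_norm_le (β * γ * g₂) (-(α * g₁))
    rw [sub_neg_eq_add, norm_neg, add_comm] at h
    rwa [hAe₁, hAe₂, ← hA] at h
  -- bounds on B
  have hBe₂ : ‖starRingEnd ℂ α * starRingEnd ℂ β * starRingEnd ℂ γ * h₂‖
      = s / (b * c ^ 2) := by
    rw [norm_mul, norm_mul, norm_mul, Complex.norm_conj, Complex.norm_conj, Complex.norm_conj,
      hα, hβ, hγ, one_mul, one_mul, one_mul, habsh₂]
  have hBu : ‖B‖ ≤ r / (b * c ^ 2) + s / (b * c ^ 2) := by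
    calc ‖B‖ ≤ ‖h₁‖ +
          ‖starRingEnd ℂ α * starRingEnd ℂ β * starRingEnd ℂ γ * h₂‖ :=
          norm_sub_le _ _
      _ = r / (b * c ^ 2) + s / (b * c ^ 2) := by rw [habsh₁, hBe₂]
  have hBl : s / (b * c ^ 2) - r / (b * c ^ 2) ≤ ‖B‖ := by
    have h := norm_sub_norm_le (starRingEnd ℂ α * starRingEnd ℂ β * starRingEnd ℂ γ * h₂) h₁
    rw [norm_sub_rev] at h
    rwa [hBe₂, habsh₁, ← hB] at h
  have habsE : ‖E‖ = ‖A‖ * ‖B‖ := by rw [hfac, norm_mul]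
  have hA0 : 0 ≤ ‖A‖ := norm_nonneg _
  have hBl0 : 0 ≤ s / (b * c ^ 2) - r / (b * c ^ 2) := by
    rw [sub_nonneg]; gcongr
  have hAl0 : 0 ≤ 2 * s / (a * b) - 2 * r / (a * b) := by
    rw [sub_nonneg]; gcongr
  have hlow : 2 * (s - r) ^ 2 / (a * b ^ 2 * c ^ 2) ≤ ‖E‖ := by
    have heq : 2 * (s - r) ^ 2 / (a * b ^ 2 * c ^ 2) =
        (2 * s / (a * b) - 2 * r / (a * b)) * (s / (b * c ^ 2) - r / (b * c ^ 2)) := by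
      field_simp
    rw [heq, habsE]
    exact mul_le_mul hAl hBl hBl0 hA0
  have hup : ‖E‖ ≤ 2 * (s + r) ^ 2 / (a * b ^ 2 * c ^ 2) := by
    have heq : 2 * (s + r) ^ 2 / (a * b ^ 2 * c ^ 2) =
        (2 * r / (a * b) + 2 * s / (a * b)) * (r / (b * c ^ 2) + s / (b * c ^ 2)) := by
      field_simp
      ring
    rw [heq, habsE]
    exact mul_le_mul hAu hBu (norm_nonneg _) (by positivity)
  refine ⟨hlow, hup, ?_⟩
  have hpos : 0 < 2 * (s - r) ^ 2 / (a * b ^ 2 * c ^ 2) := by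
    have : 0 < s - r := by linarith
    positivity
  intro h0
  rw [h0] at habsE
  simp at habsE
  have := habsE  -- abs A = 0 ∨ abs B = 0
  have hEabs : (0:ℝ) < ‖E‖ := lt_of_lt_of_le hpos hlow
  rw [h0] at hEabs
  simp at hEabs
end

section
/- Let ξ ∈ ℂ with Im ξ > 0, write ξ̄ = conj(ξ), and let α, β, γ ∈ ℂ with |α| = |β| = |γ| = 1. Set g₁ = (ξ - i)/(ξ(ξ - 1)), g₂ = (ξ̄ - i)/(ξ̄(ξ̄ - 1)), g₁' = -(ξ - i)/(ξ(ξ + 1)), g₂' = -(ξ̄ - i)/(ξ̄(ξ̄ + 1)), h₁ = (ξ - i)/(ξ(ξ - 1)(ξ + 1)), h₂ = (ξ̄ - i)/(ξ̄(ξ̄ - 1)(ξ̄ + 1)). Define E₁ := α·g₁·h₁ + β·γ·g₂·h₁ - conj(β)·conj(γ)·g₁·h₂ - conj(α)·g₂·h₂ and E₂ := α·g₁'·h₁ + β·γ·g₂'·h₁ - conj(β)·conj(γ)·g₁'·h₂ - conj(α)·g₂'·h₂. Then Im( conj(E₁)·E₂ ) > 0. -/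
open Complex

set_option maxHeartbeats 1000000

/-- The angle between the leading-order t-embedding increments of two consecutive
edges around a square face is strictly between `0` and `π`: the imaginary part of
`conj(E₁)·E₂` is strictly positive. Here the data is built from
`G_{1,0}(w) = 1/(w-1)`, `G_{0,1}(w) = -1/(w+1)`, and `H(z) = 1/z`. -/
theorem stmt_14 (ξ α β γ : ℂ) (hξ : 0 < ξ.im)
    (hα : ‖α‖ = 1) (hβ : ‖β‖ = 1) (hγ : ‖γ‖ = 1) :
    let ξb : ℂ := starRingEnd ℂ ξ
    let g₁ : ℂ := (ξ - Complex.I) / (ξ * (ξ - 1))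
    let g₂ : ℂ := (ξb - Complex.I) / (ξb * (ξb - 1))
    let g₁' : ℂ := -(ξ - Complex.I) / (ξ * (ξ + 1))
    let g₂' : ℂ := -(ξb - Complex.I) / (ξb * (ξb + 1))
    let h₁ : ℂ := (ξ - Complex.I) / (ξ * (ξ - 1) * (ξ + 1))
    let h₂ : ℂ := (ξb - Complex.I) / (ξb * (ξb - 1) * (ξb + 1))
    let E₁ : ℂ := α * g₁ * h₁ + β * γ * g₂ * h₁ -
        (starRingEnd ℂ β) * (starRingEnd ℂ γ) * g₁ * h₂ - (starRingEnd ℂ α) * g₂ * h₂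
    let E₂ : ℂ := α * g₁' * h₁ + β * γ * g₂' * h₁ -
        (starRingEnd ℂ β) * (starRingEnd ℂ γ) * g₁' * h₂ - (starRingEnd ℂ α) * g₂' * h₂
    0 < ((starRingEnd ℂ E₁) * E₂).im := by
  intro ξb g₁ g₂ g₁' g₂' h₁ h₂ E₁ E₂
  have hξb : ξb = starRingEnd ℂ ξ := rfl
  have hg₁ : g₁ = (ξ - Complex.I) / (ξ * (ξ - 1)) := rfl
  have hg₂ : g₂ = (ξb - Complex.I) / (ξb * (ξb - 1)) := rfl
  have hg₁' : g₁' = -(ξ - Complex.I) / (ξ * (ξ + 1)) := rfl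
  have hg₂' : g₂' = -(ξb - Complex.I) / (ξb * (ξb + 1)) := rfl
  have hh₁ : h₁ = (ξ - Complex.I) / (ξ * (ξ - 1) * (ξ + 1)) := rfl
  have hh₂ : h₂ = (ξb - Complex.I) / (ξb * (ξb - 1) * (ξb + 1)) := rfl
  have hE₁d : E₁ = α * g₁ * h₁ + β * γ * g₂ * h₁ -
      (starRingEnd ℂ β) * (starRingEnd ℂ γ) * g₁ * h₂ - (starRingEnd ℂ α) * g₂ * h₂ := rfl
  have hE₂d : E₂ = α * g₁' * h₁ + β * γ * g₂' * h₁ -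
      (starRingEnd ℂ β) * (starRingEnd ℂ γ) * g₁' * h₂ - (starRingEnd ℂ α) * g₂' * h₂ := rfl
  -- nonvanishing of denominators
  have hξim : ξ.im ≠ 0 := ne_of_gt hξ
  have h0 : ξ ≠ 0 := by
    intro h; rw [h] at hξ; simp at hξ
  have h1 : ξ - 1 ≠ 0 := by
    intro h; rw [sub_eq_zero] at h; rw [h] at hξ; simp at hξ
  have hp1 : ξ + 1 ≠ 0 := by
    intro h; apply hξim
    have : ξ = -1 := by linear_combination h
    rw [this]; simp
  have hb0 : ξb ≠ 0 := by rw [hξb]; exact fun h => h0 (by simpa using congrArg (starRingEnd ℂ) h)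
  have hb1 : ξb - 1 ≠ 0 := by
    rw [hξb]
    intro h
    apply h1
    have : starRingEnd ℂ (ξ - 1) = 0 := by rw [map_sub, map_one]; exact h
    simpa using congrArg (starRingEnd ℂ) this
  have hbp1 : ξb + 1 ≠ 0 := by
    rw [hξb]
    intro h
    apply hp1
    have : starRingEnd ℂ (ξ + 1) = 0 := by rw [map_add, map_one]; exact h
    simpa using congrArg (starRingEnd ℂ) this
  -- key abbreviations
  set s₁ : ℂ := α * h₁ - (starRingEnd ℂ β) * (starRingEnd ℂ γ) * h₂ with hs₁d
  set s₂ : ℂ := β * γ * h₁ - (starRingEnd ℂ α) * h₂ with hs₂d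
  set r : ℂ := (ξ - 1) / (ξ + 1) with hrd
  have hE1 : E₁ = g₁ * s₁ + g₂ * s₂ := by rw [hE₁d, hs₁d, hs₂d]; ring
  have hrb : (starRingEnd ℂ r) = (ξb - 1) / (ξb + 1) := by
    rw [hrd, hξb, map_div₀, map_sub, map_add, map_one]
  have hA : g₁' = -(g₁ * r) := by
    rw [hg₁', hg₁, hrd]
    field_simp
  have hB : g₂' = -(g₂ * (starRingEnd ℂ r)) := by
    rw [hg₂', hg₂, hrb]
    field_simp
  have hE2 : E₂ = -(g₁ * s₁ * r + g₂ * s₂ * (starRingEnd ℂ r)) := by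
    rw [hE₂d, hA, hB, hs₁d, hs₂d]
    ring
  -- norm facts for the unimodular parameters
  have hαα : α * (starRingEnd ℂ α) = 1 := by
    rw [Complex.mul_conj]
    norm_cast
    rw [Complex.normSq_eq_norm_sq, hα]; norm_num
  have hββ : β * (starRingEnd ℂ β) = 1 := by
    rw [Complex.mul_conj]
    norm_cast
    rw [Complex.normSq_eq_norm_sq, hβ]; norm_num
  have hγγ : γ * (starRingEnd ℂ γ) = 1 := by
    rw [Complex.mul_conj]
    norm_cast
    rw [Complex.normSq_eq_norm_sq, hγ]; norm_num
  -- |s₁| = |s₂|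
  have hkey : β * γ * s₁ = α * s₂ := by
    rw [hs₁d, hs₂d]
    linear_combination h₂ * hαα - γ * (starRingEnd ℂ γ) * h₂ * hββ - h₂ * hγγ
  have hnsα : Complex.normSq α = 1 := by rw [Complex.normSq_eq_norm_sq, hα]; norm_num
  have hnsβ : Complex.normSq β = 1 := by rw [Complex.normSq_eq_norm_sq, hβ]; norm_num
  have hnsγ : Complex.normSq γ = 1 := by rw [Complex.normSq_eq_norm_sq, hγ]; norm_num
  have hseq : Complex.normSq s₁ = Complex.normSq s₂ := by
    have := congrArg Complex.normSq hkey
    rw [Complex.normSq_mul, Complex.normSq_mul, Complex.normSq_mul, hnsα, hnsβ, hnsγ] at this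
    linarith
  -- |h₁| < |h₂|, |g₁| < |g₂|
  have hconjsub1 : ξb - 1 = starRingEnd ℂ (ξ - 1) := by rw [hξb, map_sub, map_one]
  have hconjadd1 : ξb + 1 = starRingEnd ℂ (ξ + 1) := by rw [hξb, map_add, map_one]
  have hconjI : ξb - Complex.I = starRingEnd ℂ (ξ + Complex.I) := by
    rw [hξb, map_add, Complex.conj_I]; ring
  have hnum : Complex.normSq (ξ - Complex.I) < Complex.normSq (ξ + Complex.I) := by
    simp only [Complex.normSq_apply, Complex.sub_re, Complex.sub_im, Complex.add_re,
      Complex.add_im, Complex.I_re, Complex.I_im]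
    nlinarith [hξ]
  have hden0 : 0 < Complex.normSq ξ := Complex.normSq_pos.mpr h0
  have hden1 : 0 < Complex.normSq (ξ - 1) := Complex.normSq_pos.mpr h1
  have hdenp1 : 0 < Complex.normSq (ξ + 1) := Complex.normSq_pos.mpr hp1
  have hg₂n : Complex.normSq g₂ =
      Complex.normSq (ξ + Complex.I) / (Complex.normSq ξ * Complex.normSq (ξ - 1)) := by
    rw [hg₂, hconjI, hconjsub1, hξb, Complex.normSq_div, Complex.normSq_mul,
      Complex.normSq_conj, Complex.normSq_conj, Complex.normSq_conj]
  have hg₁n : Complex.normSq g₁ =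
      Complex.normSq (ξ - Complex.I) / (Complex.normSq ξ * Complex.normSq (ξ - 1)) := by
    rw [hg₁, Complex.normSq_div, Complex.normSq_mul]
  have hgg : Complex.normSq g₁ < Complex.normSq g₂ := by
    rw [hg₁n, hg₂n]
    exact div_lt_div_of_pos_right hnum (by positivity)
  have hh₂n : Complex.normSq h₂ =
      Complex.normSq (ξ + Complex.I) /
        (Complex.normSq ξ * Complex.normSq (ξ - 1) * Complex.normSq (ξ + 1)) := by
    rw [hh₂, hconjI, hconjsub1, hconjadd1, hξb, Complex.normSq_div, Complex.normSq_mul,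
      Complex.normSq_mul, Complex.normSq_conj, Complex.normSq_conj, Complex.normSq_conj,
      Complex.normSq_conj]
  have hh₁n : Complex.normSq h₁ =
      Complex.normSq (ξ - Complex.I) /
        (Complex.normSq ξ * Complex.normSq (ξ - 1) * Complex.normSq (ξ + 1)) := by
    rw [hh₁, Complex.normSq_div, Complex.normSq_mul, Complex.normSq_mul]
  have hhh : Complex.normSq h₁ < Complex.normSq h₂ := by
    rw [hh₁n, hh₂n]
    exact div_lt_div_of_pos_right hnum (by positivity)
  -- s₁ ≠ 0
  have hs1ne : s₁ ≠ 0 := by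
    intro h
    have h' : α * h₁ = (starRingEnd ℂ β) * (starRingEnd ℂ γ) * h₂ := by
      rw [hs₁d, sub_eq_zero] at h; exact h
    have := congrArg Complex.normSq h'
    rw [Complex.normSq_mul, Complex.normSq_mul, Complex.normSq_mul, Complex.normSq_conj,
      Complex.normSq_conj, hnsα, hnsβ, hnsγ] at this
    simp only [one_mul] at this
    linarith
  have hs1pos : 0 < Complex.normSq s₁ := Complex.normSq_pos.mpr hs1ne
  -- the main identity for the imaginary part
  have main : ((starRingEnd ℂ E₁) * E₂).im =
      (Complex.normSq (g₂ * s₂) - Complex.normSq (g₁ * s₁)) * r.im := by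
    rw [hE1, hE2]
    set Pc : ℂ := g₁ * s₁
    set Qc : ℂ := g₂ * s₂
    have cP : (starRingEnd ℂ Pc) * Pc = (Complex.normSq Pc : ℂ) := by
      rw [mul_comm]; exact Complex.mul_conj Pc
    have cQ : (starRingEnd ℂ Qc) * Qc = (Complex.normSq Qc : ℂ) := by
      rw [mul_comm]; exact Complex.mul_conj Qc
    have e : (starRingEnd ℂ (Pc + Qc)) * (-(Pc * r + Qc * (starRingEnd ℂ r))) =
        -((Complex.normSq Pc : ℂ) * r) - (Complex.normSq Qc : ℂ) * (starRingEnd ℂ r)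
          - ((starRingEnd ℂ Qc) * Pc * r +
            starRingEnd ℂ ((starRingEnd ℂ Qc) * Pc * r)) := by
      rw [map_add]
      simp only [map_mul, Complex.conj_conj]
      linear_combination (-r) * cP - (starRingEnd ℂ r) * cQ
    rw [e]
    have him : ((starRingEnd ℂ Qc) * Pc * r +
        starRingEnd ℂ ((starRingEnd ℂ Qc) * Pc * r)).im = 0 := by
      rw [Complex.add_conj]
      simp
    simp only [Complex.sub_im, Complex.neg_im, Complex.mul_im, Complex.ofReal_im,
      Complex.ofReal_re, Complex.conj_im, Complex.conj_re, him]
    ring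
  have hrim : 0 < r.im := by
    rw [hrd]
    rw [Complex.div_im]
    have e : (ξ - 1).im * (ξ + 1).re / Complex.normSq (ξ + 1) -
        (ξ - 1).re * (ξ + 1).im / Complex.normSq (ξ + 1) =
        2 * ξ.im / Complex.normSq (ξ + 1) := by
      simp only [Complex.sub_im, Complex.sub_re, Complex.add_im, Complex.add_re,
        Complex.one_re, Complex.one_im]
      ring
    rw [e]
    positivity
  rw [main]
  apply mul_pos _ hrim
  rw [Complex.normSq_mul, Complex.normSq_mul, hseq]
  nlinarith [hgg, hs1pos]
end
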